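/- For n ≥ 2, F(A_{n+1}, f_{2n} − f_{2n−3}) = F(A_{n+2}, f_{2n} − f_{2n−3}); that is, the set of sub-words of length f_{2n} − f_{2n−3} of words in A_{n+1} equals the set of sub-words of that length of words in A_{n+2}. -/

import Mathlib

/-- The two-letter alphabet. -/
inductive Letter : Type
  | a : Letter
  | b : Letter
deriving DecidableEq

/-- A word is a finite sequence of letters. -/
abbrev Word := List Letter

/-- Concatenation set `UV = {uv : u ∈ U, v ∈ V}`. -/
def concatSet (U V : Set Word) : Set Word := {w | ∃ u ∈ U, ∃ v ∈ V, w = u ++ v}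

mutual
  /-- The sets `A_n` of inflated words (indexed so that `Aset 1 = {a}`). -/
  def Aset : ℕ → Set Word
    | 0 => ∅
    | 1 => {[Letter.a]}
    | n + 2 => concatSet (Bset (n + 1)) (concatSet (Aset (n + 1)) (Aset (n + 1)))
  /-- The sets `B_n` of inflated words (indexed so that `Bset 1 = {b}`). -/
  def Bset : ℕ → Set Word
    | 0 => ∅
    | 1 => {[Letter.b]}
    | n + 2 => concatSet (Aset (n + 1)) (Bset (n + 1)) ∪ concatSet (Bset (n + 1)) (Aset (n + 1))
end

/-- The sub-word `w[a,b] = w_a w_{a+1} … w_b` (1-indexed). -/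
def wordSlice (w : Word) (i j : ℕ) : Word := (w.drop (i - 1)).take (j - i + 1)

/-- `W[a,b] = {w[a,b] : w ∈ W}`. -/
def setSlice (W : Set Word) (i j : ℕ) : Set Word := {x | ∃ w ∈ W, x = wordSlice w i j}

/-- `x` is a sub-word (contiguous factor) of `w`. -/
def IsFactor (x w : Word) : Prop := ∃ u v : Word, w = u ++ x ++ v

/-- `F(S, m)`: the set of all sub-words of length `m` of words in `S`. -/
def FactorSet (S : Set Word) (m : ℕ) : Set Word :=
  {x | x.length = m ∧ ∃ w ∈ S, IsFactor x w}

/-- `F(A, m) = ⋃_{n ≥ 1} F(A_n, m)`. -/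
def FA (m : ℕ) : Set Word := ⋃ n ∈ {n : ℕ | 1 ≤ n}, FactorSet (Aset n) m

/-- `F(B, m) = ⋃_{n ≥ 1} F(B_n, m)`. -/
def FB (m : ℕ) : Set Word := ⋃ n ∈ {n : ℕ | 1 ≤ n}, FactorSet (Bset n) m

/-- The golden mean `τ = (1 + √5)/2`. -/
noncomputable def tau : ℝ := (1 + Real.sqrt 5) / 2


section Infra
open List

lemma Aset_intro {n : ℕ} {c a₁ a₂ : Word} (hc : c ∈ Bset (n+1))
    (h1 : a₁ ∈ Aset (n+1)) (h2 : a₂ ∈ Aset (n+1)) : c ++ (a₁ ++ a₂) ∈ Aset (n+2) :=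
  ⟨c, hc, a₁ ++ a₂, ⟨a₁, h1, a₂, h2, rfl⟩, rfl⟩

lemma Bset_intro_ab {n : ℕ} {a c : Word} (ha : a ∈ Aset (n+1)) (hc : c ∈ Bset (n+1)) :
    a ++ c ∈ Bset (n+2) := Or.inl ⟨a, ha, c, hc, rfl⟩

lemma Bset_intro_ba {n : ℕ} {c a : Word} (hc : c ∈ Bset (n+1)) (ha : a ∈ Aset (n+1)) :
    c ++ a ∈ Bset (n+2) := Or.inr ⟨c, hc, a, ha, rfl⟩

lemma Aset_elim {n : ℕ} {w : Word} (h : w ∈ Aset (n+2)) :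
    ∃ c ∈ Bset (n+1), ∃ a₁ ∈ Aset (n+1), ∃ a₂ ∈ Aset (n+1), w = c ++ (a₁ ++ a₂) := by
  obtain ⟨c, hc, v, ⟨a₁, h1, a₂, h2, rfl⟩, rfl⟩ := h
  exact ⟨c, hc, a₁, h1, a₂, h2, rfl⟩

lemma Bset_elim {n : ℕ} {w : Word} (h : w ∈ Bset (n+2)) :
    (∃ a ∈ Aset (n+1), ∃ c ∈ Bset (n+1), w = a ++ c) ∨
    (∃ c ∈ Bset (n+1), ∃ a ∈ Aset (n+1), w = c ++ a) := by
  rcases h with ⟨a, ha, c, hc, rfl⟩ | ⟨c, hc, a, ha, rfl⟩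
  · exact Or.inl ⟨a, ha, c, hc, rfl⟩
  · exact Or.inr ⟨c, hc, a, ha, rfl⟩

lemma lenAB : ∀ n : ℕ, (∀ w ∈ Aset (n+1), w.length = Nat.fib (2*n+2)) ∧
    (∀ w ∈ Bset (n+1), w.length = Nat.fib (2*n+1)) := by
  intro n
  induction n with
  | zero =>
    constructor
    · rintro w rfl; rfl
    · rintro w rfl; rfl
  | succ k ih =>
    obtain ⟨ihA, ihB⟩ := ih
    have e1 : Nat.fib (2*k+4) = Nat.fib (2*k+2) + Nat.fib (2*k+3) := Nat.fib_add_two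
    have e2 : Nat.fib (2*k+3) = Nat.fib (2*k+1) + Nat.fib (2*k+2) := Nat.fib_add_two
    constructor
    · intro w hw
      obtain ⟨c, hc, a₁, h1, a₂, h2, rfl⟩ := Aset_elim hw
      show _ = Nat.fib (2*k+4)
      simp only [length_append, ihB c hc, ihA a₁ h1, ihA a₂ h2]
      omega
    · intro w hw
      rcases Bset_elim hw with ⟨a, ha, c, hc, rfl⟩ | ⟨c, hc, a, ha, rfl⟩ <;>
      · show _ = Nat.fib (2*k+3)
        simp only [length_append, ihB c hc, ihA a ha]
        omega

lemma lenA {n : ℕ} {w : Word} (h : w ∈ Aset (n+1)) : w.length = Nat.fib (2*n+2) :=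
  (lenAB n).1 w h
lemma lenB {n : ℕ} {w : Word} (h : w ∈ Bset (n+1)) : w.length = Nat.fib (2*n+1) :=
  (lenAB n).2 w h

lemma ABne : ∀ n : ℕ, (Aset (n+1)).Nonempty ∧ (Bset (n+1)).Nonempty := by
  intro n
  induction n with
  | zero => exact ⟨⟨[Letter.a], rfl⟩, ⟨[Letter.b], rfl⟩⟩
  | succ k ih =>
    obtain ⟨⟨a, ha⟩, ⟨c, hc⟩⟩ := ih
    exact ⟨⟨c ++ (a ++ a), Aset_intro hc ha ha⟩, ⟨a ++ c, Bset_intro_ab ha hc⟩⟩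

lemma Ane (n : ℕ) : (Aset (n+1)).Nonempty := (ABne n).1
lemma Bne (n : ℕ) : (Bset (n+1)).Nonempty := (ABne n).2

def suf (u : Word) (s : ℕ) : Word := u.drop (u.length - s)

lemma suf_zero (u : Word) : suf u 0 = [] := by simp [suf]

lemma suf_length {u : Word} {s : ℕ} (h : s ≤ u.length) : (suf u s).length = s := by
  simp [suf]; omega

lemma suf_append_right {u v : Word} {s : ℕ} (h : s ≤ v.length) :
    suf (u ++ v) s = suf v s := by
  unfold suf
  rw [length_append, List.drop_append]
  have h1 : u.length + v.length - s - u.length = v.length - s := by omega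
  rw [h1]
  have h2 : u.drop (u.length + v.length - s) = [] := by
    apply drop_eq_nil_of_le; omega
  simp [h2]

lemma suf_append_left {u v : Word} {s : ℕ} (h : v.length ≤ s) :
    suf (u ++ v) s = suf u (s - v.length) ++ v := by
  unfold suf
  rw [length_append, List.drop_append]
  have h2 : u.length + v.length - s - u.length = 0 := by omega
  rw [h2, drop_zero]
  have h1 : u.length + v.length - s = u.length - (s - v.length) := by omega
  rw [h1]

lemma suf_all (u : Word) : suf u u.length = u := by simp [suf]

lemma isFactor_iff {x w : Word} : IsFactor x w ↔ x <:+: w := by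
  constructor
  · rintro ⟨u, v, rfl⟩; exact ⟨u, v, rfl⟩
  · rintro ⟨u, v, h⟩; exact ⟨u, v, h.symm⟩

lemma IsFactor.trans {x y w : Word} (h1 : IsFactor x y) (h2 : IsFactor y w) : IsFactor x w := by
  rw [isFactor_iff] at *
  exact h1.trans h2

lemma isFactor_refl (x : Word) : IsFactor x x := ⟨[], [], by simp⟩

lemma isFactor_length {x w : Word} (h : IsFactor x w) : x.length ≤ w.length := by
  rw [isFactor_iff] at h; exact h.length_le

lemma isFactor_append_left {x u v : Word} (h : IsFactor x u) : IsFactor x (u ++ v) := by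
  rw [isFactor_iff] at *; exact h.trans ⟨[], v, by simp⟩

lemma isFactor_append_right {x u v : Word} (h : IsFactor x v) : IsFactor x (u ++ v) := by
  rw [isFactor_iff] at *; exact h.trans ⟨u, [], by simp⟩

lemma sandwich (u m v : Word) (s p : ℕ) :
    IsFactor (suf u s ++ (m ++ v.take p)) (u ++ (m ++ v)) := by
  refine ⟨u.take (u.length - s), v.drop p, ?_⟩
  simp only [suf, List.append_assoc]
  rw [take_append_drop]
  rw [← List.append_assoc (u.take (u.length - s)) (u.drop (u.length - s)), take_append_drop]

lemma sandwich2 (u v : Word) (s p : ℕ) :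
    IsFactor (suf u s ++ v.take p) (u ++ v) := by
  have := sandwich u [] v s p
  simpa using this

lemma factor_split {x u v : Word} (h : IsFactor x (u ++ v)) :
    IsFactor x u ∨ IsFactor x v ∨
    ∃ s p, 1 ≤ s ∧ 1 ≤ p ∧ s ≤ u.length ∧ p ≤ v.length ∧ s + p = x.length ∧
      x = suf u s ++ v.take p := by
  obtain ⟨l, r, hw⟩ := h
  have hlen : u.length + v.length = l.length + x.length + r.length := by
    have := congrArg List.length hw
    simp [List.length_append] at this
    omega
  by_cases h1 : l.length + x.length ≤ u.length
  · left
    refine ⟨l, r.take (u.length - (l.length + x.length)), ?_⟩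
    have hu : u = ((l ++ x) ++ r).take u.length := by rw [← hw]; simp
    rw [List.take_append] at hu
    rw [take_of_length_le (by simp; omega)] at hu
    simp only [length_append] at hu
    exact hu
  · by_cases h2 : u.length ≤ l.length
    · right; left
      refine ⟨l.drop u.length, r, ?_⟩
      have hv : v = ((l ++ x) ++ r).drop u.length := by rw [← hw]; simp
      rw [List.drop_append] at hv
      have h3 : u.length - (l ++ x).length = 0 := by simp; omega
      rw [h3, drop_zero] at hv
      rw [List.drop_append] at hv
      have h4 : u.length - l.length = 0 := by omega
      rw [h4, drop_zero] at hv
      exact hv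
    · right; right
      push_neg at h1 h2
      set s := u.length - l.length with hs
      set p := x.length - s with hp
      have hsx : s ≤ x.length := by omega
      have hd : (u ++ v).drop l.length = x ++ r := by
        rw [hw, List.append_assoc, drop_left]
      have hsuf : suf u s = x.take s := by
        unfold suf
        have h5 : u.length - s = l.length := by omega
        rw [h5]
        have hu : u.drop l.length = ((u ++ v).take u.length).drop l.length := by simp
        rw [hu, drop_take, hd, List.take_append]
        have h6 : u.length - l.length - x.length = 0 := by omega
        rw [← hs, h6, take_zero, append_nil]
      have hv2 : v = (x ++ r).drop s := by
        have hda : (l ++ (x ++ r)).drop (l.length + s) = (x ++ r).drop s := List.drop_length_add_append s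
        rw [← hda]
        have hu2 : l.length + s = u.length := by omega
        rw [hu2, ← List.append_assoc, ← hw]
        simp
      have hld : (x.drop s).length = x.length - s := by rw [length_drop]
      have hpre : v.take p = x.drop s := by
        rw [hv2, List.drop_append]
        have h7 : s - x.length = 0 := by omega
        rw [h7, drop_zero, take_append_of_le_length (by rw [hld])]
        apply take_of_length_le
        rw [hld]
      refine ⟨s, p, by omega, by omega, by omega, ?_, by omega, ?_⟩
      · have : v.length = p + r.length := by omega
        omega
      · rw [hsuf, hpre, take_append_drop]

end Infra

section Aux
open List

lemma lenA2 {j : ℕ} {w : Word} (h : w ∈ Aset (j+2)) : w.length = Nat.fib (2*j+4) := lenA h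
lemma lenB2 {j : ℕ} {w : Word} (h : w ∈ Bset (j+2)) : w.length = Nat.fib (2*j+3) := lenB h
lemma lenA3 {j : ℕ} {w : Word} (h : w ∈ Aset (j+3)) : w.length = Nat.fib (2*j+6) := lenA h
lemma lenB3 {j : ℕ} {w : Word} (h : w ∈ Bset (j+3)) : w.length = Nat.fib (2*j+5) := lenB h

lemma efib1 (m : ℕ) : Nat.fib (m+2) = Nat.fib m + Nat.fib (m+1) := Nat.fib_add_two

lemma take_app_ge {u v : Word} {p : ℕ} (h : u.length ≤ p) :
    (u ++ v).take p = u ++ v.take (p - u.length) := by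
  rw [List.take_append, take_of_length_le h]

lemma liftA {j : ℕ} {x w : Word} (hw : w ∈ Aset (j+1)) (hx : IsFactor x w) :
    ∃ W ∈ Aset (j+2), IsFactor x W := by
  obtain ⟨cB, hcB⟩ := Bne j
  obtain ⟨wa, hwa⟩ := Ane j
  exact ⟨cB ++ (w ++ wa), Aset_intro hcB hw hwa,
    hx.trans ⟨cB, wa, by simp [List.append_assoc]⟩⟩

lemma liftB {j : ℕ} {x w : Word} (hw : w ∈ Bset (j+1)) (hx : IsFactor x w) :
    ∃ W ∈ Aset (j+2), IsFactor x W := by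
  obtain ⟨wa, hwa⟩ := Ane j
  exact ⟨w ++ (wa ++ wa), Aset_intro hw hwa hwa, hx.trans ⟨[], wa ++ wa, by simp⟩⟩

lemma liftBA {j : ℕ} {x c a : Word} (hc : c ∈ Bset (j+1)) (ha : a ∈ Aset (j+1))
    (hx : IsFactor x (c ++ a)) : ∃ W ∈ Aset (j+2), IsFactor x W := by
  obtain ⟨wa, hwa⟩ := Ane j
  exact ⟨c ++ (a ++ wa), Aset_intro hc ha hwa, hx.trans ⟨[], wa, by simp [List.append_assoc]⟩⟩

lemma window {N : ℕ} {W u m v : Word} (hW : W ∈ Aset N) (l r : Word)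
    (hEq : W = l ++ (u ++ (m ++ (v ++ r)))) (s p : ℕ) :
    ∃ w ∈ Aset N, IsFactor (suf u s ++ (m ++ v.take p)) w := by
  refine ⟨W, hW, (sandwich u m v s p).trans ⟨l, r, ?_⟩⟩
  rw [hEq]; simp [List.append_assoc]

lemma window2 {N : ℕ} {W u v : Word} (hW : W ∈ Aset N) (l r : Word)
    (hEq : W = l ++ (u ++ (v ++ r))) (s p : ℕ) :
    ∃ w ∈ Aset N, IsFactor (suf u s ++ v.take p) w := by
  refine ⟨W, hW, (sandwich2 u v s p).trans ⟨l, r, ?_⟩⟩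
  rw [hEq]; simp [List.append_assoc]

/-- Short prefixes of `A_k` words are prefixes of `A_{k+1}` words. -/
lemma prefR : ∀ j : ℕ, ∀ a ∈ Aset (j+1), ∀ p : ℕ, p < Nat.fib (2*j+2) →
    ∃ a' ∈ Aset (j+2), a.take p = a'.take p := by
  intro j
  induction j with
  | zero =>
    intro a _ p hp
    have hp' : p < 1 := by simpa [Nat.fib_two] using hp
    have hp0 : p = 0 := by omega
    subst hp0
    obtain ⟨a', ha'⟩ := Ane 1
    exact ⟨a', ha', by simp⟩
  | succ k ih =>
    intro a ha p hp
    have hp' : p < Nat.fib (2*k+4) := hp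
    obtain ⟨c, hc, a₁, ha₁, a₂, ha₂, rfl⟩ := Aset_elim ha
    have hlc : c.length = Nat.fib (2*k+1) := lenB hc
    have hla₁ : a₁.length = Nat.fib (2*k+2) := lenA ha₁
    have hla₂ : a₂.length = Nat.fib (2*k+2) := lenA ha₂
    have e3 : Nat.fib (2*k+3) = Nat.fib (2*k+1) + Nat.fib (2*k+2) := efib1 (2*k+1)
    have e4 : Nat.fib (2*k+4) = Nat.fib (2*k+2) + Nat.fib (2*k+3) := efib1 (2*k+2)
    have hl : (c ++ a₁).length = Nat.fib (2*k+1) + Nat.fib (2*k+2) := by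
      simp [hlc, hla₁]
    by_cases hcase : p ≤ Nat.fib (2*k+3)
    · obtain ⟨w₂, hw₂⟩ := Ane (k+1)
      refine ⟨(c ++ a₁) ++ (w₂ ++ w₂), Aset_intro (Bset_intro_ba hc ha₁) hw₂ hw₂, ?_⟩
      have h1 : (c ++ (a₁ ++ a₂)).take p = (c ++ a₁).take p := by
        rw [← List.append_assoc, take_append_of_le_length (by rw [hl]; omega)]
      have h2 : ((c ++ a₁) ++ (w₂ ++ w₂)).take p = (c ++ a₁).take p :=
        take_append_of_le_length (by rw [hl]; omega)
      rw [h1, h2]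
    · push_neg at hcase
      have hq : p - (Nat.fib (2*k+1) + Nat.fib (2*k+2)) < Nat.fib (2*k+2) := by omega
      obtain ⟨atl, hat, hateq⟩ := ih a₂ ha₂ _ hq
      have hlat : (atl : Word).length = Nat.fib (2*k+4) := lenA2 hat
      obtain ⟨w₃, hw₃⟩ := Ane (k+1)
      refine ⟨(c ++ a₁) ++ (atl ++ w₃), Aset_intro (Bset_intro_ba hc ha₁) hat hw₃, ?_⟩
      have h1 : (c ++ (a₁ ++ a₂)).take p
          = (c ++ a₁) ++ a₂.take (p - (Nat.fib (2*k+1) + Nat.fib (2*k+2))) := by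
        rw [← List.append_assoc, take_app_ge (by rw [hl]; omega), hl]
      have h2 : ((c ++ a₁) ++ (atl ++ w₃)).take p
          = (c ++ a₁) ++ atl.take (p - (Nat.fib (2*k+1) + Nat.fib (2*k+2))) := by
        rw [take_app_ge (by rw [hl]; omega), hl,
          take_append_of_le_length (by rw [hlat]; omega)]
      rw [h1, h2, hateq]

/-- Short prefixes of `B_{j+1}` words are prefixes of `A_{j+1}` words. -/
lemma prefBA : ∀ j : ℕ, ∀ c ∈ Bset (j+1), ∀ p : ℕ, p < Nat.fib (2*j) →
    ∃ a ∈ Aset (j+1), c.take p = a.take p := by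
  intro j
  match j with
  | 0 => intro c _ p hp; simp at hp
  | k+1 =>
    intro c hc p hp
    have hp' : p < Nat.fib (2*k+2) := hp
    rcases Bset_elim hc with ⟨a', ha', c', hc', rfl⟩ | ⟨c', hc', a', ha', rfl⟩
    · have hla' : a'.length = Nat.fib (2*k+2) := lenA ha'
      rw [take_append_of_le_length (by rw [hla']; omega)]
      obtain ⟨atl, hat, hateq⟩ := prefR k a' ha' p hp'
      exact ⟨atl, hat, hateq⟩
    · refine ⟨c' ++ (a' ++ a'), Aset_intro hc' ha' ha', ?_⟩
      have hlc' : c'.length = Nat.fib (2*k+1) := lenB hc'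
      have hla' : a'.length = Nat.fib (2*k+2) := lenA ha'
      have h1 : (c' ++ (a' ++ a')).take p = (c' ++ a').take p := by
        rw [← List.append_assoc, take_append_of_le_length (by simp [hlc', hla']; omega)]
      rw [h1]

/-- Prefixes of `A_{j+2}` words of length at most `fib (2j+3)` are prefixes of `B_{j+2}` words. -/
lemma prefAB {j : ℕ} {a : Word} (ha : a ∈ Aset (j+2)) {p : ℕ} (hp : p ≤ Nat.fib (2*j+3)) :
    ∃ c ∈ Bset (j+2), a.take p = c.take p := by
  obtain ⟨c, hc, a₁, ha₁, a₂, ha₂, rfl⟩ := Aset_elim ha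
  have hlc : c.length = Nat.fib (2*j+1) := lenB hc
  have hla₁ : a₁.length = Nat.fib (2*j+2) := lenA ha₁
  have e3 : Nat.fib (2*j+3) = Nat.fib (2*j+1) + Nat.fib (2*j+2) := efib1 (2*j+1)
  refine ⟨c ++ a₁, Bset_intro_ba hc ha₁, ?_⟩
  rw [← List.append_assoc, take_append_of_le_length (by simp [hlc, hla₁]; omega)]

/-- Suffixes of `A_{j+1}` words of length at most `fib (2j)` are suffixes of `B_{j+1}` words. -/
lemma sufAB {j : ℕ} {a : Word} (ha : a ∈ Aset (j+1)) {s : ℕ} (hs : s ≤ Nat.fib (2*j)) :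
    ∃ c ∈ Bset (j+1), suf a s = suf c s := by
  match j with
  | 0 =>
    have : s = 0 := by simpa using hs
    subst this
    obtain ⟨c, hc⟩ := Bne 0
    exact ⟨c, hc, by rw [suf_zero, suf_zero]⟩
  | k+1 =>
    obtain ⟨c, hc, a₁, ha₁, a₂, ha₂, rfl⟩ := Aset_elim ha
    have hla₂ : a₂.length = Nat.fib (2*k+2) := lenA ha₂
    have hs' : s ≤ Nat.fib (2*k+2) := hs
    obtain ⟨c₀, hc₀⟩ := Bne k
    have hs2 : s ≤ a₂.length := by rw [hla₂]; omega
    refine ⟨c₀ ++ a₂, Bset_intro_ba hc₀ ha₂, ?_⟩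
    rw [suf_append_right (by simp; omega), suf_append_right hs2, suf_append_right hs2]

end Aux

section Triples
open List

lemma L3 (j : ℕ) {a c a' : Word} (ha : a ∈ Aset (j+2)) (hc : c ∈ Bset (j+2))
    (ha' : a' ∈ Aset (j+2)) {s p : ℕ} (hs : 1 ≤ s) (hp : 1 ≤ p)
    (hsum : s + p ≤ Nat.fib (2*j)) :
    ∃ w ∈ Aset (j+3), IsFactor (suf a s ++ (c ++ a'.take p)) w := by
  obtain ⟨c₁, hc₁, a₁, ha₁, a₂, ha₂, rfl⟩ := Aset_elim ha
  obtain ⟨c₅, hc₅, a₅, ha₅, a₆, ha₆, rfl⟩ := Aset_elim ha'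
  have e2 : Nat.fib (2*j+2) = Nat.fib (2*j) + Nat.fib (2*j+1) := efib1 (2*j)
  have m1 : Nat.fib (2*j) ≤ Nat.fib (2*j+1) := Nat.fib_mono (by omega)
  have hsuf : suf (c₁ ++ (a₁ ++ a₂)) s = suf a₂ s := by
    rw [suf_append_right (by simp [lenA ha₁, lenA ha₂]; omega),
        suf_append_right (by simp [lenA ha₂]; omega)]
  have htake : (c₅ ++ (a₅ ++ a₆)).take p = c₅.take p :=
    take_append_of_le_length (by rw [lenB hc₅]; omega)
  obtain ⟨a₇, ha₇, h₇⟩ := prefBA j c₅ hc₅ p (by omega)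
  rw [hsuf, htake, h₇]
  obtain ⟨cB2, hcB2⟩ := Bne (j+1)
  obtain ⟨cb, hcb⟩ := Bne j
  obtain ⟨wa, hwa⟩ := Ane j
  rcases Bset_elim hc with ⟨a₃, ha₃, c₃, hc₃, rfl⟩ | ⟨c₃, hc₃, a₃, ha₃, rfl⟩
  · exact window
      (Aset_intro hcB2 (Aset_intro hcb ha₂ ha₃) (Aset_intro hc₃ ha₇ hwa))
      (cB2 ++ cb) wa (by simp [List.append_assoc]) s p
  · exact window
      (Aset_intro hcB2 (Aset_intro hcb hwa ha₂) (Aset_intro hc₃ ha₃ ha₇))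
      (cB2 ++ (cb ++ wa)) [] (by simp [List.append_assoc]) s p

lemma L4 (j : ℕ) {c c' a : Word} (hc : c ∈ Bset (j+2)) (hc' : c' ∈ Bset (j+2))
    (ha : a ∈ Aset (j+2)) {s p : ℕ} (hs : 1 ≤ s) (hp : 1 ≤ p)
    (hsum : s + p ≤ Nat.fib (2*j)) :
    ∃ w ∈ Aset (j+3), IsFactor (suf c s ++ (c' ++ a.take p)) w := by
  obtain ⟨c₅, hc₅, a₅, ha₅, a₆, ha₆, rfl⟩ := Aset_elim ha
  have e2 : Nat.fib (2*j+2) = Nat.fib (2*j) + Nat.fib (2*j+1) := efib1 (2*j)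
  have m1 : Nat.fib (2*j) ≤ Nat.fib (2*j+1) := Nat.fib_mono (by omega)
  have htake : (c₅ ++ (a₅ ++ a₆)).take p = c₅.take p :=
    take_append_of_le_length (by rw [lenB hc₅]; omega)
  obtain ⟨a₇, ha₇, h₇⟩ := prefBA j c₅ hc₅ p (by omega)
  rw [htake, h₇]
  obtain ⟨cB2, hcB2⟩ := Bne (j+1)
  obtain ⟨cb, hcb⟩ := Bne j
  obtain ⟨wa, hwa⟩ := Ane j
  obtain ⟨wA2, hwA2⟩ := Ane (j+1)
  rcases Bset_elim hc with ⟨a₁, ha₁, c₁, hc₁, rfl⟩ | ⟨c₁, hc₁, a₁, ha₁, rfl⟩ <;>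
    rcases Bset_elim hc' with ⟨a₂, ha₂, c₂, hc₂, rfl⟩ | ⟨c₂, hc₂, a₂, ha₂, rfl⟩
  · -- c = a₁++c₁, c' = a₂++c₂ : B A B A
    rw [suf_append_right (by rw [lenB hc₁]; omega)]
    exact window
      (Aset_intro (Bset_intro_ba hc₁ ha₂) (Aset_intro hc₂ ha₇ hwa) hwA2)
      [] (wa ++ wA2) (by simp [List.append_assoc]) s p
  · -- c = a₁++c₁, c' = c₂++a₂ : B B A A
    rw [suf_append_right (by rw [lenB hc₁]; omega)]
    exact window
      (Aset_intro (Bset_intro_ab hwa hc₁) (Aset_intro hc₂ ha₂ ha₇) hwA2)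
      wa wA2 (by simp [List.append_assoc]) s p
  · -- c = c₁++a₁, c' = a₂++c₂ : A A B A
    rw [suf_append_right (by rw [lenA ha₁]; omega)]
    exact window
      (Aset_intro hcB2 (Aset_intro hcb ha₁ ha₂) (Aset_intro hc₂ ha₇ hwa))
      (cB2 ++ cb) wa (by simp [List.append_assoc]) s p
  · -- c = c₁++a₁, c' = c₂++a₂ : A B A A
    rw [suf_append_right (by rw [lenA ha₁]; omega)]
    exact window
      (Aset_intro hcB2 (Aset_intro hcb hwa ha₁) (Aset_intro hc₂ ha₂ ha₇))
      (cB2 ++ (cb ++ wa)) [] (by simp [List.append_assoc]) s p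

lemma L5 (j : ℕ) {a c c' : Word} (ha : a ∈ Aset (j+2)) (hc : c ∈ Bset (j+2))
    (hc' : c' ∈ Bset (j+2)) {s p : ℕ} (hs : 1 ≤ s) (hp : 1 ≤ p)
    (hsum : s + p ≤ Nat.fib (2*j)) :
    ∃ w ∈ Aset (j+3), IsFactor (suf a s ++ (c ++ c'.take p)) w := by
  obtain ⟨c₁, hc₁, a₁, ha₁, a₂, ha₂, rfl⟩ := Aset_elim ha
  have e2 : Nat.fib (2*j+2) = Nat.fib (2*j) + Nat.fib (2*j+1) := efib1 (2*j)
  have m1 : Nat.fib (2*j) ≤ Nat.fib (2*j+1) := Nat.fib_mono (by omega)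
  have hsuf : suf (c₁ ++ (a₁ ++ a₂)) s = suf a₂ s := by
    rw [suf_append_right (by simp [lenA ha₁, lenA ha₂]; omega),
        suf_append_right (by simp [lenA ha₂]; omega)]
  rw [hsuf]
  have hv : ∃ v ∈ Aset (j+1), c'.take p = v.take p := by
    rcases Bset_elim hc' with ⟨a₄, ha₄, c₄, hc₄, rfl⟩ | ⟨c₄, hc₄, a₄, ha₄, rfl⟩
    · exact ⟨a₄, ha₄, take_append_of_le_length (by rw [lenA ha₄]; omega)⟩
    · obtain ⟨a₇, ha₇, h₇⟩ := prefBA j c₄ hc₄ p (by omega)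
      exact ⟨a₇, ha₇, by
        rw [take_append_of_le_length (by rw [lenB hc₄]; omega), h₇]⟩
  obtain ⟨v, hv, hveq⟩ := hv
  rw [hveq]
  obtain ⟨cB2, hcB2⟩ := Bne (j+1)
  obtain ⟨cb, hcb⟩ := Bne j
  obtain ⟨wa, hwa⟩ := Ane j
  rcases Bset_elim hc with ⟨a₃, ha₃, c₃, hc₃, rfl⟩ | ⟨c₃, hc₃, a₃, ha₃, rfl⟩
  · exact window
      (Aset_intro hcB2 (Aset_intro hcb ha₂ ha₃) (Aset_intro hc₃ hv hwa))
      (cB2 ++ cb) wa (by simp [List.append_assoc]) s p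
  · exact window
      (Aset_intro hcB2 (Aset_intro hcb hwa ha₂) (Aset_intro hc₃ ha₃ hv))
      (cB2 ++ (cb ++ wa)) [] (by simp [List.append_assoc]) s p

end Triples

section CrossL1
open List

lemma L1 (j : ℕ) {a c x : Word} (ha : a ∈ Aset (j+2)) (hc : c ∈ Bset (j+2))
    (hx : IsFactor x (a ++ c)) (hlen : x.length ≤ 2 * Nat.fib (2*j+2)) :
    ∃ w ∈ Aset (j+3), IsFactor x w := by
  rcases factor_split hx with hxa | hxc | ⟨s, p, hs1, hp1, hsle, hple, hsum, hxeq⟩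
  · exact liftA ha hxa
  · exact liftB hc hxc
  · rw [lenB2 hc] at hple
    have hx2 : s + p ≤ 2 * Nat.fib (2*j+2) := by omega
    obtain ⟨c₁, hc₁, a₁, ha₁, a₂, ha₂, rfl⟩ := Aset_elim ha
    have la₁ := lenA ha₁
    have la₂ := lenA ha₂
    have e2 : Nat.fib (2*j+2) = Nat.fib (2*j) + Nat.fib (2*j+1) := efib1 (2*j)
    have e3 : Nat.fib (2*j+3) = Nat.fib (2*j+1) + Nat.fib (2*j+2) := efib1 (2*j+1)
    obtain ⟨cB2, hcB2⟩ := Bne (j+1)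
    obtain ⟨wA2, hwA2⟩ := Ane (j+1)
    obtain ⟨cb, hcb⟩ := Bne j
    obtain ⟨wa, hwa⟩ := Ane j
    rw [hxeq]
    by_cases hsA : s ≤ Nat.fib (2*j+2)
    · have hsuf : suf (c₁ ++ (a₁ ++ a₂)) s = suf a₂ s := by
        rw [suf_append_right (by simp [la₁, la₂]; omega),
            suf_append_right (by rw [la₂]; omega)]
      rw [hsuf]
      rcases Bset_elim hc with ⟨a₃, ha₃, c₃, hc₃, rfl⟩ | ⟨c₃, hc₃, a₃, ha₃, rfl⟩
      · by_cases hpA : p ≤ Nat.fib (2*j+2)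
        · rw [take_append_of_le_length (by rw [lenA ha₃]; omega)]
          exact window2 (Aset_intro hcB2 (Aset_intro hcb ha₂ ha₃) hwA2)
            (cB2 ++ cb) wA2 (by simp [List.append_assoc]) s p
        · rw [take_app_ge (by rw [lenA ha₃]; omega), lenA ha₃]
          exact window (Aset_intro hcB2 (Aset_intro hcb ha₂ ha₃) (Aset_intro hc₃ hwa hwa))
            (cB2 ++ cb) (wa ++ wa) (by simp [List.append_assoc]) s _
      · by_cases hpB : p ≤ Nat.fib (2*j+1)
        · rw [take_append_of_le_length (by rw [lenB hc₃]; omega)]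
          exact window2 (Aset_intro hcB2 (Aset_intro hcb hwa ha₂) (Aset_intro hc₃ hwa hwa))
            (cB2 ++ (cb ++ wa)) (wa ++ wa) (by simp [List.append_assoc]) s p
        · rw [take_app_ge (by rw [lenB hc₃]; omega), lenB hc₃]
          exact window (Aset_intro hcB2 (Aset_intro hcb hwa ha₂) (Aset_intro hc₃ ha₃ hwa))
            (cB2 ++ (cb ++ wa)) wa (by simp [List.append_assoc]) s _
    · push_neg at hsA
      have hsuf : suf (c₁ ++ (a₁ ++ a₂)) s = suf a₁ (s - Nat.fib (2*j+2)) ++ a₂ := by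
        rw [suf_append_right (by simp [la₁, la₂]; omega),
            suf_append_left (by rw [la₂]; omega), la₂]
      rw [hsuf, List.append_assoc]
      rcases Bset_elim hc with ⟨a₃, ha₃, c₃, hc₃, rfl⟩ | ⟨c₃, hc₃, a₃, ha₃, rfl⟩
      · by_cases hpA : p ≤ Nat.fib (2*j+2)
        · by_cases hpB : p ≤ Nat.fib (2*j+1)
          · rcases j with _ | j₀
            · exfalso
              have h22 : Nat.fib (2*0+2) = 1 := rfl
              omega
            · have hpB' : p ≤ Nat.fib (2*j₀+3) := hpB
              rw [take_append_of_le_length (by rw [lenA ha₃]; omega)]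
              obtain ⟨ct, hct, hcteq⟩ := prefAB (j := j₀) ha₃ hpB'
              rw [hcteq]
              exact window (Aset_intro hcB2 (Aset_intro hcb ha₁ ha₂) (Aset_intro hct hwa hwa))
                (cB2 ++ cb) (wa ++ wa) (by simp [List.append_assoc]) _ p
          · push_neg at hpB
            have hs' : s - Nat.fib (2*j+2) ≤ Nat.fib (2*j) := by omega
            obtain ⟨ct, hct, hcteq⟩ := sufAB ha₁ hs'
            rw [take_append_of_le_length (by rw [lenA ha₃]; omega), hcteq]
            exact window (Aset_intro hcB2 (Aset_intro hct ha₂ ha₃) hwA2)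
              cB2 wA2 (by simp [List.append_assoc]) _ p
        · exfalso; omega
      · by_cases hpB : p ≤ Nat.fib (2*j+1)
        · rw [take_append_of_le_length (by rw [lenB hc₃]; omega)]
          exact window (Aset_intro hcB2 (Aset_intro hcb ha₁ ha₂) (Aset_intro hc₃ hwa hwa))
            (cB2 ++ cb) (wa ++ wa) (by simp [List.append_assoc]) _ p
        · rw [take_app_ge (by rw [lenB hc₃]; omega), lenB hc₃,
            ← List.append_assoc a₂ c₃]
          exact window (Aset_intro hcB2 (Aset_intro hcb ha₁ ha₂) (Aset_intro hc₃ ha₃ hwa))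
            (cB2 ++ cb) wa (by simp [List.append_assoc]) _ _

end CrossL1

section CrossL2
open List

lemma L2 (j : ℕ) {c c' x : Word} (hc : c ∈ Bset (j+2)) (hc' : c' ∈ Bset (j+2))
    (hx : IsFactor x (c ++ c')) (hlen : x.length ≤ 2 * Nat.fib (2*j+2)) :
    ∃ w ∈ Aset (j+3), IsFactor x w := by
  rcases factor_split hx with hxc | hxc' | ⟨s, p, hs1, hp1, hsle, hple, hsum, hxeq⟩
  · exact liftB hc hxc
  · exact liftB hc' hxc'
  · rw [lenB2 hc] at hsle
    rw [lenB2 hc'] at hple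
    have hx2 : s + p ≤ 2 * Nat.fib (2*j+2) := by omega
    have e2 : Nat.fib (2*j+2) = Nat.fib (2*j) + Nat.fib (2*j+1) := efib1 (2*j)
    have e3 : Nat.fib (2*j+3) = Nat.fib (2*j+1) + Nat.fib (2*j+2) := efib1 (2*j+1)
    obtain ⟨cB2, hcB2⟩ := Bne (j+1)
    obtain ⟨wA2, hwA2⟩ := Ane (j+1)
    obtain ⟨cb, hcb⟩ := Bne j
    obtain ⟨wa, hwa⟩ := Ane j
    rw [hxeq]
    rcases Bset_elim hc with ⟨a₁, ha₁, c₁, hc₁, rfl⟩ | ⟨c₁, hc₁, a₁, ha₁, rfl⟩ <;>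
      rcases Bset_elim hc' with ⟨a₂, ha₂, c₂, hc₂, rfl⟩ | ⟨c₂, hc₂, a₂, ha₂, rfl⟩
    · -- c = a₁++c₁ , c' = a₂++c₂
      by_cases hsB : s ≤ Nat.fib (2*j+1)
      · rw [suf_append_right (by rw [lenB hc₁]; omega)]
        by_cases hpA : p ≤ Nat.fib (2*j+2)
        · -- 1: sB pA
          rw [take_append_of_le_length (by rw [lenA ha₂]; omega)]
          exact window2 (Aset_intro hcB2 (Aset_intro hc₁ ha₂ hwa) hwA2)
            cB2 (wa ++ wA2) (by simp [List.append_assoc]) s p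
        · -- 2: sB pAB
          rw [take_app_ge (by rw [lenA ha₂]; omega), lenA ha₂]
          exact window (Aset_intro (Bset_intro_ba hc₁ ha₂) (Aset_intro hc₂ hwa hwa) hwA2)
            [] (wa ++ (wa ++ wA2)) (by simp [List.append_assoc]) s _
      · push_neg at hsB
        rw [suf_append_left (by rw [lenB hc₁]; omega), lenB hc₁]
        by_cases hpA : p ≤ Nat.fib (2*j+2)
        · -- 9: sAB pA
          rw [take_append_of_le_length (by rw [lenA ha₂]; omega), List.append_assoc]
          exact window (Aset_intro hcB2 (Aset_intro hcb hwa ha₁) (Aset_intro hc₁ ha₂ hwa))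
            (cB2 ++ (cb ++ wa)) wa (by simp [List.append_assoc]) _ p
        · -- 10: sAB pAB
          push_neg at hpA
          rw [take_app_ge (by rw [lenA ha₂]; omega), lenA ha₂]
          obtain ⟨a₇, ha₇, h₇⟩ := prefBA j c₂ hc₂ (p - Nat.fib (2*j+2)) (by omega)
          rw [h₇, show (suf a₁ (s - Nat.fib (2*j+1)) ++ c₁) ++ (a₂ ++ a₇.take (p - Nat.fib (2*j+2)))
              = suf a₁ (s - Nat.fib (2*j+1)) ++ ((c₁ ++ a₂) ++ a₇.take (p - Nat.fib (2*j+2)))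
            by simp [List.append_assoc]]
          exact window (Aset_intro hcB2 (Aset_intro hcb hwa ha₁) (Aset_intro hc₁ ha₂ ha₇))
            (cB2 ++ (cb ++ wa)) [] (by simp [List.append_assoc]) _ _
    · -- c = a₁++c₁ , c' = c₂++a₂
      by_cases hsB : s ≤ Nat.fib (2*j+1)
      · rw [suf_append_right (by rw [lenB hc₁]; omega)]
        by_cases hpB : p ≤ Nat.fib (2*j+1)
        · -- 3: sB pB
          rw [take_append_of_le_length (by rw [lenB hc₂]; omega)]
          exact window2 (Aset_intro (Bset_intro_ab hwa hc₁) (Aset_intro hc₂ hwa hwa) hwA2)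
            wa (wa ++ (wa ++ wA2)) (by simp [List.append_assoc]) s p
        · -- 4: sB pBA
          rw [take_app_ge (by rw [lenB hc₂]; omega), lenB hc₂]
          exact window (Aset_intro (Bset_intro_ab hwa hc₁) (Aset_intro hc₂ ha₂ hwa) hwA2)
            wa (wa ++ wA2) (by simp [List.append_assoc]) s _
      · push_neg at hsB
        rw [suf_append_left (by rw [lenB hc₁]; omega), lenB hc₁]
        by_cases hpB : p ≤ Nat.fib (2*j+1)
        · -- 11: sAB pB
          rw [take_append_of_le_length (by rw [lenB hc₂]; omega), List.append_assoc]
          exact window (Aset_intro (Bset_intro_ab ha₁ hc₁) (Aset_intro hc₂ hwa hwa) hwA2)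
            [] (wa ++ (wa ++ wA2)) (by simp [List.append_assoc]) _ p
        · -- 12: sAB pBA
          rw [take_app_ge (by rw [lenB hc₂]; omega), lenB hc₂,
            show (suf a₁ (s - Nat.fib (2*j+1)) ++ c₁) ++ (c₂ ++ a₂.take (p - Nat.fib (2*j+1)))
              = suf a₁ (s - Nat.fib (2*j+1)) ++ ((c₁ ++ c₂) ++ a₂.take (p - Nat.fib (2*j+1)))
            from by simp [List.append_assoc]]
          exact window (Aset_intro (Bset_intro_ab ha₁ hc₁) (Aset_intro hc₂ ha₂ hwa) hwA2)
            [] (wa ++ wA2) (by simp [List.append_assoc]) _ _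
    · -- c = c₁++a₁ , c' = a₂++c₂
      by_cases hsA : s ≤ Nat.fib (2*j+2)
      · rw [suf_append_right (by rw [lenA ha₁]; omega)]
        by_cases hpA : p ≤ Nat.fib (2*j+2)
        · -- 5: sA pA
          rw [take_append_of_le_length (by rw [lenA ha₂]; omega)]
          exact window2 (Aset_intro hcB2 (Aset_intro hcb ha₁ ha₂) hwA2)
            (cB2 ++ cb) wA2 (by simp [List.append_assoc]) s p
        · -- 6: sA pAB
          rw [take_app_ge (by rw [lenA ha₂]; omega), lenA ha₂]
          exact window (Aset_intro hcB2 (Aset_intro hcb ha₁ ha₂) (Aset_intro hc₂ hwa hwa))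
            (cB2 ++ cb) (wa ++ wa) (by simp [List.append_assoc]) s _
      · push_neg at hsA
        rw [suf_append_left (by rw [lenA ha₁]; omega), lenA ha₁]
        by_cases hpA : p ≤ Nat.fib (2*j+2)
        · -- 13: sBA pA
          rw [take_append_of_le_length (by rw [lenA ha₂]; omega), List.append_assoc]
          exact window (Aset_intro hcB2 (Aset_intro hc₁ ha₁ ha₂) hwA2)
            cB2 wA2 (by simp [List.append_assoc]) _ p
        · -- 14: sBA pAB
          rw [take_app_ge (by rw [lenA ha₂]; omega), lenA ha₂,
            show (suf c₁ (s - Nat.fib (2*j+2)) ++ a₁) ++ (a₂ ++ c₂.take (p - Nat.fib (2*j+2)))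
              = suf c₁ (s - Nat.fib (2*j+2)) ++ ((a₁ ++ a₂) ++ c₂.take (p - Nat.fib (2*j+2)))
            from by simp [List.append_assoc]]
          exact window (Aset_intro hcB2 (Aset_intro hc₁ ha₁ ha₂) (Aset_intro hc₂ hwa hwa))
            cB2 (wa ++ wa) (by simp [List.append_assoc]) _ _
    · -- c = c₁++a₁ , c' = c₂++a₂
      by_cases hsA : s ≤ Nat.fib (2*j+2)
      · rw [suf_append_right (by rw [lenA ha₁]; omega)]
        by_cases hpB : p ≤ Nat.fib (2*j+1)
        · -- 7: sA pB
          rw [take_append_of_le_length (by rw [lenB hc₂]; omega)]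
          exact window2 (Aset_intro hcB2 (Aset_intro hcb hwa ha₁) (Aset_intro hc₂ hwa hwa))
            (cB2 ++ (cb ++ wa)) (wa ++ wa) (by simp [List.append_assoc]) s p
        · -- 8: sA pBA
          rw [take_app_ge (by rw [lenB hc₂]; omega), lenB hc₂]
          exact window (Aset_intro hcB2 (Aset_intro hcb hwa ha₁) (Aset_intro hc₂ ha₂ hwa))
            (cB2 ++ (cb ++ wa)) wa (by simp [List.append_assoc]) s _
      · push_neg at hsA
        rw [suf_append_left (by rw [lenA ha₁]; omega), lenA ha₁]
        by_cases hpB : p ≤ Nat.fib (2*j+1)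
        · -- 15: sBA pB
          rw [take_append_of_le_length (by rw [lenB hc₂]; omega), List.append_assoc]
          exact window (Aset_intro (Bset_intro_ba hc₁ ha₁) (Aset_intro hc₂ hwa hwa) hwA2)
            [] (wa ++ (wa ++ wA2)) (by simp [List.append_assoc]) _ p
        · -- 16: sBA pBA
          rw [take_app_ge (by rw [lenB hc₂]; omega), lenB hc₂,
            show (suf c₁ (s - Nat.fib (2*j+2)) ++ a₁) ++ (c₂ ++ a₂.take (p - Nat.fib (2*j+1)))
              = suf c₁ (s - Nat.fib (2*j+2)) ++ ((a₁ ++ c₂) ++ a₂.take (p - Nat.fib (2*j+1)))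
            from by simp [List.append_assoc]]
          exact window (Aset_intro (Bset_intro_ba hc₁ ha₁) (Aset_intro hc₂ ha₂ hwa) hwA2)
            [] (wa ++ wA2) (by simp [List.append_assoc]) _ _

end CrossL2

section Main
open List

lemma len_suftake {u v : Word} {s p : ℕ} (hs : s ≤ u.length) :
    (suf u s ++ v.take p).length ≤ s + p := by
  rw [length_append, suf_length hs]
  simp [List.length_take]

lemma HARD (k : ℕ) : ∀ x : Word, x.length ≤ 2 * Nat.fib (2*k+2) →
    ∀ w ∈ Aset (k+4), IsFactor x w → ∃ w' ∈ Aset (k+3), IsFactor x w' := by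
  intro x hlen w hw hfac
  obtain ⟨Y, hY, u₁, hu₁, u₂, hu₂, rfl⟩ := Aset_elim hw
  have e2 : Nat.fib (2*k+2) = Nat.fib (2*k) + Nat.fib (2*k+1) := efib1 (2*k)
  have e3 : Nat.fib (2*k+3) = Nat.fib (2*k+1) + Nat.fib (2*k+2) := efib1 (2*k+1)
  have e4 : Nat.fib (2*k+4) = Nat.fib (2*k+2) + Nat.fib (2*k+3) := efib1 (2*k+2)
  have e5 : Nat.fib (2*k+5) = Nat.fib (2*k+3) + Nat.fib (2*k+4) := efib1 (2*k+3)
  have e6 : Nat.fib (2*k+6) = Nat.fib (2*k+4) + Nat.fib (2*k+5) := efib1 (2*k+4)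
  have m1 : Nat.fib (2*k) ≤ Nat.fib (2*k+1) := Nat.fib_mono (by omega)
  have m2 : Nat.fib (2*k+1) ≤ Nat.fib (2*k+2) := Nat.fib_mono (by omega)
  rcases factor_split hfac with hxY | hxU | ⟨s, p, hs1, hp1, hsle, hple, hsum, hxeq⟩
  · -- x is a factor of Y ∈ Bset (k+3)
    rcases Bset_elim hY with ⟨aY, haY, cY, hcY, rfl⟩ | ⟨cY, hcY, aY, haY, rfl⟩
    · exact L1 k haY hcY hxY hlen
    · exact liftBA hcY haY hxY
  · -- x is a factor of u₁ ++ u₂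
    rcases factor_split hxU with h1 | h2 | ⟨s, p, hs1, hp1, hsle, hple, hsum, hxeq⟩
    · exact ⟨u₁, hu₁, h1⟩
    · exact ⟨u₂, hu₂, h2⟩
    · obtain ⟨c₁, hc₁, a₁, ha₁, a₂, ha₂, rfl⟩ := Aset_elim hu₁
      obtain ⟨c₂, hc₂, a₃, ha₃, a₄, ha₄, rfl⟩ := Aset_elim hu₂
      have hx2 : s + p ≤ 2 * Nat.fib (2*k+2) := by omega
      have hsa₂ : s ≤ a₂.length := by rw [lenA2 ha₂]; omega
      have hsuf : suf (c₁ ++ (a₁ ++ a₂)) s = suf a₂ s := by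
        rw [suf_append_right (by simp [lenA2 ha₁, lenA2 ha₂]; omega),
            suf_append_right hsa₂]
      rw [hxeq, hsuf]
      by_cases hpB : p ≤ Nat.fib (2*k+3)
      · rw [take_append_of_le_length (by rw [lenB2 hc₂]; omega)]
        exact L1 k ha₂ hc₂ (sandwich2 a₂ c₂ s p)
          (le_trans (len_suftake hsa₂) (by omega))
      · push_neg at hpB
        rw [take_app_ge (by rw [lenB2 hc₂]; omega), lenB2 hc₂,
          take_append_of_le_length (by rw [lenA2 ha₃]; omega)]
        exact L3 k ha₂ hc₂ ha₃ hs1 (by omega) (by omega)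
  · -- x crosses the boundary Y | u₁ ++ u₂
    obtain ⟨c₁, hc₁, a₁, ha₁, a₂, ha₂, rfl⟩ := Aset_elim hu₁
    have hx2 : s + p ≤ 2 * Nat.fib (2*k+2) := by omega
    have ht1 : ((c₁ ++ (a₁ ++ a₂)) ++ u₂).take p = (c₁ ++ (a₁ ++ a₂)).take p :=
      take_append_of_le_length (by simp [lenB2 hc₁, lenA2 ha₁, lenA2 ha₂]; omega)
    rw [hxeq, ht1]
    rcases Bset_elim hY with ⟨aY, haY, cY, hcY, rfl⟩ | ⟨cY, hcY, aY, haY, rfl⟩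
    · -- Y = aY ++ cY
      by_cases hsB : s ≤ Nat.fib (2*k+3)
      · have hscY : s ≤ cY.length := by rw [lenB2 hcY]; omega
        rw [suf_append_right hscY]
        by_cases hpB : p ≤ Nat.fib (2*k+3)
        · rw [take_append_of_le_length (by rw [lenB2 hc₁]; omega)]
          exact L2 k hcY hc₁ (sandwich2 cY c₁ s p)
            (le_trans (len_suftake hscY) (by omega))
        · rw [take_app_ge (by rw [lenB2 hc₁]; omega), lenB2 hc₁,
            take_append_of_le_length (by rw [lenA2 ha₁]; omega)]
          exact L4 k hcY hc₁ ha₁ hs1 (by omega) (by omega)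
      · push_neg at hsB
        rw [suf_append_left (by rw [lenB2 hcY]; omega), lenB2 hcY,
          take_append_of_le_length (by rw [lenB2 hc₁]; omega), List.append_assoc]
        exact L5 k haY hcY hc₁ (by omega) hp1 (by omega)
    · -- Y = cY ++ aY
      rw [suf_append_right (by rw [lenA2 haY]; omega)]
      have hsaY : s ≤ aY.length := by rw [lenA2 haY]; omega
      by_cases hpB : p ≤ Nat.fib (2*k+3)
      · rw [take_append_of_le_length (by rw [lenB2 hc₁]; omega)]
        exact L1 k haY hc₁ (sandwich2 aY c₁ s p)
          (le_trans (len_suftake hsaY) (by omega))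
      · rw [take_app_ge (by rw [lenB2 hc₁]; omega), lenB2 hc₁,
          take_append_of_le_length (by rw [lenA2 ha₁]; omega)]
        exact L3 k haY hc₁ ha₁ hs1 (by omega) (by omega)

end Main

theorem factors_Aset_succ_eq (n : ℕ) (hn : 2 ≤ n) :
    FactorSet (Aset (n + 1)) (Nat.fib (2 * n) - Nat.fib (2 * n - 3)) =
      FactorSet (Aset (n + 2)) (Nat.fib (2 * n) - Nat.fib (2 * n - 3)) := by
  obtain ⟨k, rfl⟩ : ∃ k, n = k + 2 := ⟨n - 2, by omega⟩
  have e2 : Nat.fib (2*k+2) = Nat.fib (2*k) + Nat.fib (2*k+1) := efib1 (2*k)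
  have e3 : Nat.fib (2*k+3) = Nat.fib (2*k+1) + Nat.fib (2*k+2) := efib1 (2*k+1)
  have e4 : Nat.fib (2*k+4) = Nat.fib (2*k+2) + Nat.fib (2*k+3) := efib1 (2*k+2)
  have mEq : Nat.fib (2*(k+2)) - Nat.fib (2*(k+2)-3) = 2 * Nat.fib (2*k+2) := by
    have h1 : 2*(k+2) = 2*k+4 := by ring
    rw [h1]
    have h2 : 2*k+4-3 = 2*k+1 := by omega
    rw [h2]
    omega
  rw [mEq]
  ext x
  simp only [FactorSet, Set.mem_setOf_eq]
  constructor
  · rintro ⟨hlen, w, hw, hfac⟩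
    exact ⟨hlen, liftA hw hfac⟩
  · rintro ⟨hlen, w, hw, hfac⟩
    exact ⟨hlen, HARD k x (le_of_eq hlen) w hw hfac⟩
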